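/- arXiv:1708.05648 — 2 statements merged into one kernel-verified Lean document; each statement's English description precedes it below -/
import Mathlib

section
/- Let $g:[0,\infty)\to[0,\infty)$ be differentiable with $g'(x)\ge 0$ for all $x\ge 0$, and suppose $\int_x^\infty g'(t)/t\,dt < \infty$ for all $x>0$. Then for any nonnegative integrable function $f$ on a ball $B_r(x_0)\subset\mathbb{R}^n$, the average of $g\circ f$ satisfies $\fint_{B_r(x_0)} g(f(y))\,dy \le J_g\big(\fint_{B_r(x_0)} f(y)\,dy\big)$, where $J_g(x) = g(x) + x\int_x^\infty \frac{g'(t)}{t}\,dt$. -/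
open MeasureTheory Metric Set

/-- Pointwise key inequality: for `0 < a` and `0 ≤ s`,
`g s ≤ g a + s * ∫_{Ioi a} g'(t)/t`. -/
lemma key_ineq (g : ℝ → ℝ) (hg_diff : Differentiable ℝ g)
    (hg'_nonneg : ∀ x ≥ (0:ℝ), 0 ≤ deriv g x)
    (a : ℝ) (ha : 0 < a)
    (hint : IntegrableOn (fun t => deriv g t / t) (Set.Ioi a))
    (s : ℝ) (hs : 0 ≤ s) :
    g s ≤ g a + s * ∫ t in Set.Ioi a, deriv g t / t := by
  have hmono : MonotoneOn g (Set.Ici 0) := by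
    apply monotoneOn_of_deriv_nonneg (convex_Ici 0) hg_diff.continuous.continuousOn
      (fun x _ => (hg_diff x).differentiableWithinAt)
    intro x hx
    rw [interior_Ici] at hx
    exact hg'_nonneg x (le_of_lt hx)
  have hC : 0 ≤ ∫ t in Set.Ioi a, deriv g t / t := by
    apply setIntegral_nonneg measurableSet_Ioi
    intro t ht
    exact div_nonneg (hg'_nonneg t (le_of_lt (ha.trans ht))) (le_of_lt (ha.trans ht))
  rcases le_or_gt s a with h | h
  · have h1 : g s ≤ g a := hmono hs ha.le h
    nlinarith [mul_nonneg hs hC]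
  · -- a < s
    have hts : IntegrableOn (fun t => deriv g t / t) (Set.Ioc a s) :=
      hint.mono_set Set.Ioc_subset_Ioi_self
    have hint2 : IntegrableOn (fun t => s * (deriv g t / t)) (Set.Ioc a s) :=
      hts.const_mul s
    have hbound : ∀ t ∈ Set.Ioc a s, deriv g t ≤ s * (deriv g t / t) := by
      intro t ht
      have ht0 : 0 < t := ha.trans ht.1
      calc deriv g t = t * (deriv g t / t) := by field_simp
        _ ≤ s * (deriv g t / t) := mul_le_mul_of_nonneg_right ht.2
            (div_nonneg (hg'_nonneg t ht0.le) ht0.le)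
    have hderInt : IntegrableOn (deriv g) (Set.Ioc a s) := by
      apply Integrable.mono' hint2 (measurable_deriv g).aestronglyMeasurable
      filter_upwards [ae_restrict_mem measurableSet_Ioc] with t ht
      have ht0 : 0 < t := ha.trans ht.1
      rw [Real.norm_eq_abs, abs_of_nonneg (hg'_nonneg t ht0.le)]
      exact hbound t ht
    have hFTC : ∫ t in a..s, deriv g t = g s - g a :=
      intervalIntegral.integral_deriv_eq_sub (fun x _ => hg_diff x)
        ((intervalIntegrable_iff_integrableOn_Ioc_of_le h.le).2 hderInt)
    rw [intervalIntegral.integral_of_le h.le] at hFTC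
    have h1 : ∫ t in Set.Ioc a s, deriv g t ≤
        ∫ t in Set.Ioc a s, s * (deriv g t / t) :=
      setIntegral_mono_on hderInt hint2 measurableSet_Ioc hbound
    have h2 : ∫ t in Set.Ioc a s, s * (deriv g t / t) =
        s * ∫ t in Set.Ioc a s, deriv g t / t := integral_const_mul _ _
    have h3 : ∫ t in Set.Ioc a s, deriv g t / t ≤
        ∫ t in Set.Ioi a, deriv g t / t := by
      apply setIntegral_mono_set hint
      · filter_upwards [ae_restrict_mem measurableSet_Ioi] with t ht
        exact div_nonneg (hg'_nonneg t (le_of_lt (ha.trans ht))) (le_of_lt (ha.trans ht))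
      · exact Filter.Eventually.of_forall Set.Ioc_subset_Ioi_self
    nlinarith [mul_le_mul_of_nonneg_left h3 hs]

/-- Jensen-type inequality for functions with nonnegative derivative:
the average of `g ∘ f` over a ball is bounded by `J_g` of the average of `f`,
where `J_g x = g x + x * ∫_x^∞ g'(t)/t dt`. -/
theorem stmt_0 (n : ℕ) (g : ℝ → ℝ)
    (hg_nonneg : ∀ x ≥ (0:ℝ), 0 ≤ g x)
    (hg_diff : Differentiable ℝ g)
    (hg'_nonneg : ∀ x ≥ (0:ℝ), 0 ≤ deriv g x)
    (hg_int : ∀ x > (0:ℝ), IntegrableOn (fun t => deriv g t / t) (Set.Ioi x))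
    (x₀ : EuclideanSpace ℝ (Fin n)) (r : ℝ) (hr : 0 < r)
    (f : EuclideanSpace ℝ (Fin n) → ℝ)
    (hf_nonneg : ∀ y, 0 ≤ f y)
    (hf_int : IntegrableOn f (ball x₀ r))
    (hgf_int : IntegrableOn (fun y => g (f y)) (ball x₀ r)) :
    ⨍ y in ball x₀ r, g (f y) ≤
      g (⨍ y in ball x₀ r, f y) +
        (⨍ y in ball x₀ r, f y) * ∫ t in Set.Ioi (⨍ y in ball x₀ r, f y), deriv g t / t := by
  have hμpos : 0 < volume (ball x₀ r) := measure_ball_pos _ _ hr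
  have hμfin : volume (ball x₀ r) < ⊤ := measure_ball_lt_top
  set V : ℝ := (volume (ball x₀ r)).toReal with hV_def
  have hV : 0 < V := ENNReal.toReal_pos hμpos.ne' hμfin.ne
  have havg : (⨍ y in ball x₀ r, f y) = V⁻¹ * ∫ y in ball x₀ r, f y := by
    rw [setAverage_eq, smul_eq_mul, measureReal_def]
  have hInonneg : 0 ≤ ∫ y in ball x₀ r, f y :=
    setIntegral_nonneg measurableSet_ball (fun y _ => hf_nonneg y)
  have ha0 : 0 ≤ ⨍ y in ball x₀ r, f y := by
    rw [havg]; positivity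
  rcases ha0.eq_or_lt with heq | hlt
  · -- average is zero : f = 0 a.e. on the ball
    have hI0 : ∫ y in ball x₀ r, f y = 0 := by
      have h := havg.symm.trans heq.symm
      exact (mul_eq_zero.1 h).resolve_left (inv_ne_zero hV.ne')
    have hf0 : f =ᶠ[ae (volume.restrict (ball x₀ r))] 0 := by
      rw [← integral_eq_zero_iff_of_nonneg hf_nonneg hf_int]
      exact hI0
    have hgf0 : (fun y => g (f y)) =ᶠ[ae (volume.restrict (ball x₀ r))]
        (fun _ => g 0) := by
      filter_upwards [hf0] with y hy
      simp [hy]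
    have hL : ⨍ y in ball x₀ r, g (f y) = g 0 := by
      rw [average_congr hgf0, setAverage_eq, setIntegral_const, smul_smul]
      rw [measureReal_def, inv_mul_cancel₀ hV.ne', one_smul]
    rw [hL, ← heq]
    simp
  · -- average is positive: apply the pointwise inequality and integrate
    set a : ℝ := ⨍ y in ball x₀ r, f y with ha_def
    set C : ℝ := ∫ t in Set.Ioi a, deriv g t / t with hC_def
    have hkey : ∀ y, g (f y) ≤ g a + f y * C := by
      intro y
      exact key_ineq g hg_diff hg'_nonneg a hlt (hg_int a hlt) (f y) (hf_nonneg y)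
    have hrhs_int : IntegrableOn (fun y => g a + f y * C) (ball x₀ r) := by
      have : Fact (volume (ball x₀ r) < ⊤) := ⟨hμfin⟩
      exact (integrable_const (g a)).add (hf_int.mul_const C)
    have hmono : ∫ y in ball x₀ r, g (f y) ≤
        ∫ y in ball x₀ r, (g a + f y * C) :=
      setIntegral_mono hgf_int hrhs_int (fun y => hkey y)
    have hsplit : ∫ y in ball x₀ r, (g a + f y * C) =
        V * g a + (∫ y in ball x₀ r, f y) * C := by
      rw [integral_add (by
          have : Fact (volume (ball x₀ r) < ⊤) := ⟨hμfin⟩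
          exact integrable_const (g a)) (hf_int.mul_const C)]
      rw [setIntegral_const, integral_mul_const, smul_eq_mul, measureReal_def]

    calc ⨍ y in ball x₀ r, g (f y)
        = V⁻¹ * ∫ y in ball x₀ r, g (f y) := by rw [setAverage_eq, smul_eq_mul, measureReal_def]
      _ ≤ V⁻¹ * (V * g a + (∫ y in ball x₀ r, f y) * C) := by
          rw [← hsplit]
          exact mul_le_mul_of_nonneg_left hmono (by positivity)
      _ = g a + a * C := by
          rw [havg]
          field_simp
end

section
/- Let $F:[0,\infty)\to\mathbb{R}$ be $C^2$ with $F''\ge 0$ on $[0,\infty)$ (i.e. $F$ convex), and let $e(x)=F'(x)x-F(x)$. Then $e$ is monotone nondecreasing on $[0,\infty)$, and for any nonnegative integrable $f$ on a ball $B\subset\mathbb{R}^n$, by convexity duality one has $\fint_B e(f(y))\,dy \le e\big(\fint_B f\big) + \big(\fint_B f\big)\int_{\fint_B f}^{\infty} \frac{e'(t)}{t}\,dt$, provided the last integral is finite. -/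
open MeasureTheory Metric Set

/-- For convex `F` (i.e. `F'' ≥ 0`), the error term `e(x) = F'(x)x - F(x)` is nondecreasing
on `[0,∞)`, and the Jensen-type inequality
`⨍_B e(f) ≤ e(⨍_B f) + (⨍_B f) ∫_{⨍_B f}^∞ e'(t)/t dt` holds. -/
theorem stmt_6 (n : ℕ) (F : ℝ → ℝ) (hF : ContDiff ℝ 2 F)
    (hconv : ∀ x ≥ (0:ℝ), 0 ≤ deriv (deriv F) x)
    (x₀ : EuclideanSpace ℝ (Fin n)) (r : ℝ) (hr : 0 < r)
    (f : EuclideanSpace ℝ (Fin n) → ℝ)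
    (hf0 : ∀ y, 0 ≤ f y)
    (hfint : IntegrableOn f (ball x₀ r))
    (heint : IntegrableOn (fun y => deriv F (f y) * f y - F (f y)) (ball x₀ r))
    (hJint : IntegrableOn (fun t => deriv (fun s => deriv F s * s - F s) t / t)
        (Set.Ioi (⨍ y in ball x₀ r, f y))) :
    MonotoneOn (fun x => deriv F x * x - F x) (Set.Ici 0) ∧
    ⨍ y in ball x₀ r, (deriv F (f y) * f y - F (f y)) ≤
      (deriv F (⨍ y in ball x₀ r, f y) * (⨍ y in ball x₀ r, f y) - F (⨍ y in ball x₀ r, f y)) +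
        (⨍ y in ball x₀ r, f y) *
          ∫ t in Set.Ioi (⨍ y in ball x₀ r, f y), deriv (fun s => deriv F s * s - F s) t / t := by
  set e : ℝ → ℝ := fun s => deriv F s * s - F s with he
  have hF1 : ContDiff ℝ 1 (deriv F) := by
    have : ContDiff ℝ (1 + 1) F := by norm_num; exact hF
    exact (contDiff_succ_iff_deriv.mp this).2.2
  have hF'diff : Differentiable ℝ (deriv F) := hF1.differentiable one_ne_zero
  have hFdiff : Differentiable ℝ F := hF.differentiable (by norm_num)
  have hF''cont : Continuous (deriv (deriv F)) := hF1.continuous_deriv le_rfl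
  -- derivative of e
  have hde : ∀ t : ℝ, HasDerivAt e (deriv (deriv F) t * t) t := by
    intro t
    have h1 : HasDerivAt (fun s => deriv F s * s) (deriv (deriv F) t * t + deriv F t * 1) t :=
      (hF'diff t).hasDerivAt.mul (hasDerivAt_id t)
    have h2 := (hFdiff t).hasDerivAt
    have := h1.sub h2
    simpa [mul_one, he, Pi.sub_def] using this
  have hde' : ∀ t : ℝ, deriv e t = deriv (deriv F) t * t := fun t => (hde t).deriv
  have hecont : Continuous e := by
    exact ((hF1.continuous.mul continuous_id).sub hF.continuous)
  -- monotonicity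
  have hmono : MonotoneOn e (Set.Ici 0) := by
    apply monotoneOn_of_deriv_nonneg (convex_Ici 0) hecont.continuousOn
    · intro t ht
      exact ((hde t).differentiableAt).differentiableWithinAt
    · intro t ht
      rw [interior_Ici] at ht
      rw [hde' t]
      exact mul_nonneg (hconv t ht.le) ht.le
  refine ⟨hmono, ?_⟩
  set B := ball x₀ r with hB
  set m := ⨍ y in B, f y with hm
  have hBmeas : MeasurableSet B := measurableSet_ball
  have hμpos : 0 < volume B := measure_ball_pos _ _ hr
  have hμfin : volume B < ⊤ := measure_ball_lt_top
  have hV : (0:ℝ) < (volume B).toReal := ENNReal.toReal_pos hμpos.ne' hμfin.ne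
  have hm0 : 0 ≤ m := by
    rw [hm, setAverage_eq, smul_eq_mul]
    exact mul_nonneg (by positivity) (setIntegral_nonneg hBmeas fun y _ => hf0 y)
  -- rewrite the Jensen integrand as F''
  have hcongr : ∀ t ∈ Set.Ioi m, deriv e t / t = deriv (deriv F) t := by
    intro t ht
    have ht0 : 0 < t := lt_of_le_of_lt hm0 ht
    rw [hde' t, mul_div_assoc, div_self ht0.ne', mul_one]
  have hJint' : IntegrableOn (fun t => deriv (deriv F) t) (Set.Ioi m) := by
    exact hJint.congr_fun hcongr measurableSet_Ioi
  have hCint : (∫ t in Set.Ioi m, deriv e t / t) = ∫ t in Set.Ioi m, deriv (deriv F) t :=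
    setIntegral_congr_fun measurableSet_Ioi hcongr
  set C := ∫ t in Set.Ioi m, deriv (deriv F) t with hC
  have hC0 : 0 ≤ C :=
    setIntegral_nonneg measurableSet_Ioi fun t ht => hconv t (hm0.trans (le_of_lt ht))
  -- pointwise inequality
  have key : ∀ x : ℝ, 0 ≤ x → e x ≤ e m + x * C := by
    intro x hx
    rcases le_or_gt x m with hxm | hmx
    · have := hmono hx hm0 hxm
      nlinarith [mul_nonneg hx hC0]
    · have hint1 : IntervalIntegrable (fun t => deriv (deriv F) t * t) volume m x :=
        (hF''cont.mul continuous_id).intervalIntegrable m x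
      have hint2 : IntervalIntegrable (fun t => deriv (deriv F) t * x) volume m x :=
        (hF''cont.mul continuous_const).intervalIntegrable m x
      have heq : e x - e m = ∫ t in m..x, deriv (deriv F) t * t := by
        rw [intervalIntegral.integral_eq_sub_of_hasDerivAt (fun t _ => hde t) hint1]
      have hle1 : (∫ t in m..x, deriv (deriv F) t * t) ≤ ∫ t in m..x, deriv (deriv F) t * x := by
        apply intervalIntegral.integral_mono_on hmx.le hint1 hint2
        intro t ht
        exact mul_le_mul_of_nonneg_left ht.2 (hconv t (hm0.trans ht.1))
      have hle2 : (∫ t in m..x, deriv (deriv F) t * x) = (∫ t in m..x, deriv (deriv F) t) * x :=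
        intervalIntegral.integral_mul_const x _
      have hle3 : (∫ t in m..x, deriv (deriv F) t) ≤ C := by
        rw [intervalIntegral.integral_of_le hmx.le]
        apply setIntegral_mono_set hJint'
        · exact (ae_restrict_iff' measurableSet_Ioi).mpr
            (Filter.Eventually.of_forall fun t ht => hconv t (hm0.trans ht.le))
        · exact HasSubset.Subset.eventuallyLE Set.Ioc_subset_Ioi_self
      nlinarith [mul_le_mul_of_nonneg_right hle3 hx]
  -- averaging
  rw [setAverage_eq, smul_eq_mul, hCint]
  show (volume B).toReal⁻¹ * (∫ y in B, e (f y)) ≤ e m + m * C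
  have hconst : IntegrableOn (fun _ : EuclideanSpace ℝ (Fin n) => e m) B := by
    exact integrableOn_const hμfin.ne
  have h1 : (∫ y in B, e (f y)) ≤ ∫ y in B, (e m + f y * C) := by
    refine setIntegral_mono_on heint (hconst.add (hfint.mul_const C)) hBmeas ?_
    intro y _
    simpa [mul_comm] using key (f y) (hf0 y)
  have h2 : (∫ y in B, (e m + f y * C)) = e m * (volume B).toReal + (∫ y in B, f y) * C := by
    rw [integral_add hconst (hfint.mul_const C), setIntegral_const, smul_eq_mul,
      integral_mul_const, measureReal_def]
    ring
  have hmm : m = (volume B).toReal⁻¹ * ∫ y in B, f y := by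
    rw [hm, setAverage_eq, smul_eq_mul, measureReal_def]
  calc (volume B).toReal⁻¹ * (∫ y in B, e (f y))
      ≤ (volume B).toReal⁻¹ * (e m * (volume B).toReal + (∫ y in B, f y) * C) := by
        exact mul_le_mul_of_nonneg_left (h1.trans_eq h2) (by positivity)
    _ = e m + m * C := by
        rw [hmm]; field_simp
end
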